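/- For m = -1, the unique solution on [0,∞) of f''' = -(f')² with f(0) = a, f'(0) = -1 and f'(t) → 0 as t → ∞, is f(t) = a - √6 + 6/(t+√6); in particular this function satisfies all the stated conditions. -/

import Mathlib

open Real Set Filter Topology

lemma sq6_pos : (0:ℝ) < Real.sqrt 6 := Real.sqrt_pos.mpr (by norm_num)

lemma F_hasDeriv (a : ℝ) {t : ℝ} (ht : t + Real.sqrt 6 ≠ 0) :
    HasDerivAt (fun s => a - Real.sqrt 6 + 6 / (s + Real.sqrt 6)) (-6 / (t + Real.sqrt 6)^2) t := by
  have h1 : HasDerivAt (fun s : ℝ => s + Real.sqrt 6) 1 t := (hasDerivAt_id t).add_const _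
  have h3 := ((h1.inv ht).const_mul (6:ℝ)).const_add (a - Real.sqrt 6)
  convert h3 using 1
  · rfl
  · rfl
  · rfl
  field_simp

lemma F1_hasDeriv {t : ℝ} (ht : t + Real.sqrt 6 ≠ 0) :
    HasDerivAt (fun s : ℝ => -6 / (s + Real.sqrt 6)^2) (12 / (t + Real.sqrt 6)^3) t := by
  have h1 : HasDerivAt (fun s : ℝ => s + Real.sqrt 6) 1 t := (hasDerivAt_id t).add_const _
  have h2 : HasDerivAt (fun s : ℝ => (s + Real.sqrt 6)^2) (2*(t+Real.sqrt 6)) t := by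
    simpa using h1.fun_pow 2
  have h3 := (h2.inv (pow_ne_zero 2 ht)).const_mul (-6:ℝ)
  convert h3 using 1
  · rfl
  · rfl
  · rfl
  field_simp; ring

lemma F2_hasDeriv {t : ℝ} (ht : t + Real.sqrt 6 ≠ 0) :
    HasDerivAt (fun s : ℝ => 12 / (s + Real.sqrt 6)^3) (-36 / (t + Real.sqrt 6)^4) t := by
  have h1 : HasDerivAt (fun s : ℝ => s + Real.sqrt 6) 1 t := (hasDerivAt_id t).add_const _
  have h2 : HasDerivAt (fun s : ℝ => (s + Real.sqrt 6)^3) (3*(t+Real.sqrt 6)^2) t := by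
    simpa using h1.fun_pow 3
  have h3 := (h2.inv (pow_ne_zero 3 ht)).const_mul (12:ℝ)
  convert h3 using 1
  · rfl
  · rfl
  · rfl
  field_simp; ring

lemma derivF_eq (a : ℝ) {t : ℝ} (ht : -Real.sqrt 6 < t) :
    deriv (fun s => a - Real.sqrt 6 + 6 / (s + Real.sqrt 6)) t = -6 / (t + Real.sqrt 6)^2 :=
  (F_hasDeriv a (by linarith)).deriv

lemma deriv2F_eq (a : ℝ) {t : ℝ} (ht : -Real.sqrt 6 < t) :
    deriv (deriv (fun s => a - Real.sqrt 6 + 6 / (s + Real.sqrt 6))) t = 12 / (t + Real.sqrt 6)^3 := by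
  have hev : deriv (fun s => a - Real.sqrt 6 + 6 / (s + Real.sqrt 6))
      =ᶠ[𝓝 t] fun s => -6 / (s + Real.sqrt 6)^2 :=
    Filter.eventually_of_mem (isOpen_Ioi.mem_nhds ht) (fun s hs => derivF_eq a hs)
  rw [hev.deriv_eq]
  exact (F1_hasDeriv (by linarith)).deriv

lemma deriv3F_eq (a : ℝ) {t : ℝ} (ht : -Real.sqrt 6 < t) :
    deriv (deriv (deriv (fun s => a - Real.sqrt 6 + 6 / (s + Real.sqrt 6)))) t
      = -36 / (t + Real.sqrt 6)^4 := by
  have hev : deriv (deriv (fun s => a - Real.sqrt 6 + 6 / (s + Real.sqrt 6)))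
      =ᶠ[𝓝 t] fun s => 12 / (s + Real.sqrt 6)^3 :=
    Filter.eventually_of_mem (isOpen_Ioi.mem_nhds ht) (fun s hs => deriv2F_eq a hs)
  rw [hev.deriv_eq]
  exact (F2_hasDeriv (by linarith)).deriv

lemma const_on {φ : ℝ → ℝ} {A B : ℝ} (hAB : A ≤ B) (hd : ∀ s ∈ Icc A B, HasDerivAt φ 0 s) :
    φ B = φ A := by
  have hc : ContinuousOn φ (Icc A B) := fun s hs => (hd s hs).continuousAt.continuousWithinAt
  exact constant_of_has_deriv_right_zero hc
    (fun x hx => (hd x ⟨hx.1, hx.2.le⟩).hasDerivWithinAt) B (right_mem_Icc.mpr hAB)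

lemma uniq (a : ℝ) (f : ℝ → ℝ)
    (hd1 : ∀ t ∈ Set.Ici (0:ℝ), DifferentiableAt ℝ f t)
    (hd2 : ∀ t ∈ Set.Ici (0:ℝ), DifferentiableAt ℝ (deriv f) t)
    (hd3 : ∀ t ∈ Set.Ici (0:ℝ), DifferentiableAt ℝ (deriv (deriv f)) t)
    (hode : ∀ t ∈ Set.Ici (0:ℝ), deriv (deriv (deriv f)) t = -(deriv f t) ^ 2)
    (hf0 : f 0 = a) (hg0 : deriv f 0 = -1)
    (hlim : Tendsto (deriv f) atTop (nhds 0)) :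
    ∀ t ∈ Set.Ici (0:ℝ), f t = a - Real.sqrt 6 + 6 / (t + Real.sqrt 6) := by
  set g := deriv f with hg
  set h := deriv g with hh
  -- Step 1: h is antitone on Ici 0
  have hanti : AntitoneOn h (Ici 0) := by
    apply antitoneOn_of_deriv_nonpos (convex_Ici 0)
      (fun t ht => (hd3 t ht).continuousAt.continuousWithinAt)
      (fun t ht => (hd3 t (by rw [interior_Ici] at ht; exact mem_Ici.mpr (le_of_lt (mem_Ioi.mp ht)))).differentiableWithinAt)
    intro t ht
    rw [interior_Ici] at ht
    rw [hode t (mem_Ici.mpr (le_of_lt (mem_Ioi.mp ht)))]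
    exact neg_nonpos.mpr (sq_nonneg _)
  -- Step 2: h ≥ 0 on Ici 0
  have hpos : ∀ t ∈ Ici (0:ℝ), 0 ≤ h t := by
    intro t0 ht0
    by_contra hneg
    push_neg at hneg
    -- g t ≤ g t0 + h t0 * (t - t0) for t ≥ t0
    have hG : AntitoneOn (fun t => g t - h t0 * t) (Ici t0) := by
      apply antitoneOn_of_deriv_nonpos (convex_Ici t0)
      · intro t ht
        exact ((hd2 t (mem_Ici.mpr (le_trans (mem_Ici.mp ht0) (mem_Ici.mp ht)))).continuousAt.sub
          ((continuous_const.mul continuous_id).continuousAt)).continuousWithinAt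
      · intro t ht
        rw [interior_Ici] at ht
        exact ((hd2 t (mem_Ici.mpr (le_trans (mem_Ici.mp ht0) (mem_Ioi.mp ht).le))).sub
          ((differentiable_const _).mul differentiable_id).differentiableAt).differentiableWithinAt
      · intro t ht
        rw [interior_Ici] at ht
        have hdt : HasDerivAt (fun t => g t - h t0 * t) (h t - h t0) t := by
          simpa using ((hd2 t (mem_Ici.mpr (le_trans (mem_Ici.mp ht0) (mem_Ioi.mp ht).le))).hasDerivAt.fun_sub
            ((hasDerivAt_id t).const_mul (h t0)))
        rw [hdt.deriv]
        have := hanti ht0 (mem_Ici.mpr (le_trans (mem_Ici.mp ht0) (mem_Ioi.mp ht).le)) (mem_Ioi.mp ht).le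
        linarith
    have hev : ∀ᶠ t in atTop, -1 < g t ∧ t ≥ max t0 ((h t0 * t0 - 1 - g t0) / h t0) :=
      (hlim.eventually (eventually_gt_nhds (by norm_num : (-1:ℝ) < 0))).and
        (eventually_ge_atTop _)
    obtain ⟨t, hgt, htge⟩ := hev.exists
    have ht1 : t0 ≤ t := le_trans (le_max_left _ _) htge
    have := hG (self_mem_Ici) ht1 ht1
    have ht2 : (h t0 * t0 - 1 - g t0) / h t0 ≤ t := le_trans (le_max_right _ _) htge
    have hkey : h t0 * t ≤ h t0 * t0 - 1 - g t0 := by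
      have h5 := (mul_le_mul_left_of_neg hneg).mpr ht2
      calc h t0 * t ≤ h t0 * ((h t0 * t0 - 1 - g t0) / h t0) := h5
        _ = h t0 * t0 - 1 - g t0 := by
            rw [mul_div_assoc', mul_comm, mul_div_assoc, div_self (ne_of_lt hneg), mul_one]
    simp only at this
    linarith
  -- Step 3: g monotone on Ici 0
  have hmono : MonotoneOn g (Ici 0) := by
    apply monotoneOn_of_deriv_nonneg (convex_Ici 0)
      (fun t ht => (hd2 t ht).continuousAt.continuousWithinAt)
      (fun t ht => (hd2 t (by rw [interior_Ici] at ht; exact mem_Ici.mpr (le_of_lt (mem_Ioi.mp ht)))).differentiableWithinAt)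
    intro t ht
    rw [interior_Ici] at ht
    exact hpos t (mem_Ici.mpr (le_of_lt (mem_Ioi.mp ht)))
  -- Step 4: g ≤ 0 on Ici 0
  have hgle : ∀ t ∈ Ici (0:ℝ), g t ≤ 0 := by
    intro t0 ht0
    by_contra hneg
    push_neg at hneg
    obtain ⟨t, hgt, ht1⟩ := ((hlim.eventually (eventually_lt_nhds hneg)).and
      (eventually_ge_atTop t0)).exists
    exact absurd (hmono ht0 (le_trans ht0 ht1) ht1) (not_le.mpr hgt)
  -- Step 5: energy is constant on Ici 0
  have hEderiv : ∀ t ∈ Ici (0:ℝ),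
      HasDerivAt (fun t => (h t)^2/2 + (g t)^3/3) 0 t := by
    intro t ht
    have h1 : HasDerivAt (fun t => (h t)^2/2 + (g t)^3/3)
        ((2 * h t ^ 1 * deriv h t)/2 + (3 * g t ^ 2 * h t)/3) t :=
      ((((hd3 t ht).hasDerivAt.pow 2).div_const 2).add
        (((hd2 t ht).hasDerivAt.pow 3).div_const 3))
    rw [hode t ht] at h1
    convert h1 using 1
    ring
  have hEconst : ∀ t ∈ Ici (0:ℝ), (h t)^2/2 + (g t)^3/3 = (h 0)^2/2 + (g 0)^3/3 := by
    intro t ht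
    exact const_on ht (fun s hs => hEderiv s hs.1)
  -- Step 6: the energy constant is 0, i.e. h t ^ 2 = (2/3) * (-g t)^3
  obtain ⟨c, hEconst⟩ : ∃ c, ∀ t ∈ Ici (0:ℝ), (h t)^2/2 + (g t)^3/3 = c :=
    ⟨_, hEconst⟩
  have hc0 : c = 0 := by
    rcases lt_trichotomy c 0 with hlt | heq | hgt
    · -- h t ^2 = 2c - (2/3) g t^3 ≥ 0, g → 0 gives 0 ≤ 2c < 0 eventually
      have h3 : Tendsto (fun x : ℝ => x ^ 3) (𝓝 0) (𝓝 0) := by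
        have : ContinuousAt (fun x : ℝ => x ^ 3) 0 := by fun_prop
        simpa using this.tendsto
      have hcube : ∀ᶠ x in 𝓝 (0:ℝ), 3*c < x ^ 3 :=
        h3.eventually (eventually_gt_nhds (by linarith))
      obtain ⟨t, hgt, ht1⟩ := ((hlim.eventually hcube).and (eventually_ge_atTop (0:ℝ))).exists
      have := hEconst t ht1
      nlinarith [sq_nonneg (h t)]
    · exact heq
    · -- h t ≥ sqrt (2c) > 0 for all t, so g → ∞, contradiction
      exfalso
      have hsq : ∀ t ∈ Ici (0:ℝ), Real.sqrt (2*c) ≤ h t := by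
        intro t ht
        have hE := hEconst t ht
        have hg3 : g t ^ 3 ≤ 0 := Odd.pow_nonpos ⟨1, by norm_num⟩ (hgle t ht)
        have h2 : 2*c ≤ h t ^ 2 := by linarith
        calc Real.sqrt (2*c) ≤ Real.sqrt (h t ^ 2) := Real.sqrt_le_sqrt h2
          _ = h t := by rw [Real.sqrt_sq (hpos t ht)]
      set L := Real.sqrt (2*c) with hL
      have hLpos : 0 < L := Real.sqrt_pos.mpr (by linarith)
      have hGmono : MonotoneOn (fun t => g t - L * t) (Ici 0) := by
        apply monotoneOn_of_deriv_nonneg (convex_Ici 0)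
        · intro t ht
          exact ((hd2 t ht).continuousAt.sub
            ((continuous_const.mul continuous_id).continuousAt)).continuousWithinAt
        · intro t ht
          rw [interior_Ici] at ht
          exact ((hd2 t (mem_Ici.mpr (mem_Ioi.mp ht).le)).sub
            ((differentiable_const _).mul differentiable_id).differentiableAt).differentiableWithinAt
        · intro t ht
          rw [interior_Ici] at ht
          have hdt : HasDerivAt (fun t => g t - L * t) (h t - L) t := by
            simpa using ((hd2 t (mem_Ici.mpr (mem_Ioi.mp ht).le)).hasDerivAt.fun_sub ((hasDerivAt_id t).const_mul L))
          rw [hdt.deriv]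
          linarith [hsq t (mem_Ici.mpr (mem_Ioi.mp ht).le)]
      obtain ⟨t, hgt, ht1⟩ := ((hlim.eventually (eventually_lt_nhds (by norm_num : (0:ℝ) < 1))).and
        (eventually_ge_atTop (max 0 ((1 - g 0)/L)))).exists
      have ht0 : (0:ℝ) ≤ t := le_trans (le_max_left _ _) ht1
      have := hGmono self_mem_Ici ht0 ht0
      simp only at this
      have ht2 : (1 - g 0)/L ≤ t := le_trans (le_max_right _ _) ht1
      have : 1 - g 0 ≤ L * t := by
        rw [div_le_iff₀ hLpos] at ht2
        linarith
      linarith [hGmono self_mem_Ici ht0 ht0]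
  have hE2 : ∀ t ∈ Ici (0:ℝ), h t ^ 2 = 2/3 * (-(g t))^3 := by
    intro t ht
    have h1 := hEconst t ht
    rw [hc0] at h1
    have h2 : (-(g t))^3 = -(g t)^3 := Odd.neg_pow ⟨1, by norm_num⟩ _
    linarith
  have hsqrt6 : (0:ℝ) < Real.sqrt 6 := Real.sqrt_pos.mpr (by norm_num)
  have h6 : Real.sqrt 6 ^ 2 = 6 := Real.sq_sqrt (by norm_num)
  -- key: explicit formula on intervals where g is negative
  have key : ∀ b, 0 ≤ b → (∀ s ∈ Icc (0:ℝ) b, g s < 0) →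
      g b = -6/(b + Real.sqrt 6)^2 := by
    intro b hb hneg
    set w : ℝ → ℝ := fun t => (Real.sqrt (-(g t)))⁻¹ with hw
    have hvder : ∀ s ∈ Icc (0:ℝ) b, HasDerivAt (fun t => w t - t / Real.sqrt 6) 0 s := by
      intro s hs
      have hs0 : s ∈ Ici (0:ℝ) := hs.1
      have hgs : g s < 0 := hneg s hs
      have hxpos : (0:ℝ) < -(g s) := by linarith
      have hgd : HasDerivAt g (h s) s := (hd2 s hs0).hasDerivAt
      have hsqd : HasDerivAt (fun t => Real.sqrt (-(g t)))
          (-(h s) / (2 * Real.sqrt (-(g s)))) s := hgd.neg.sqrt (ne_of_gt hxpos)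
      have hsx : (0:ℝ) < Real.sqrt (-(g s)) := Real.sqrt_pos.mpr hxpos
      have hwd := hsqd.inv (ne_of_gt hsx)
      have hsq : Real.sqrt (-(g s)) ^ 2 = -(g s) := Real.sq_sqrt hxpos.le
      have hval : h s = 2 * (-(g s)) * Real.sqrt (-(g s)) / Real.sqrt 6 := by
        have hhs : 0 ≤ h s := hpos s hs0
        have h2 : h s ^ 2 = 2/3 * (-(g s))^3 := hE2 s hs0
        have hrhs : 0 ≤ 2 * (-(g s)) * Real.sqrt (-(g s)) / Real.sqrt 6 := by positivity
        calc h s = Real.sqrt (h s ^ 2) := (Real.sqrt_sq hhs).symm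
          _ = Real.sqrt ((2 * (-(g s)) * Real.sqrt (-(g s)) / Real.sqrt 6) ^ 2) := by
              congr 1
              rw [h2]
              field_simp
              nlinarith [hsq, h6]
          _ = 2 * (-(g s)) * Real.sqrt (-(g s)) / Real.sqrt 6 := Real.sqrt_sq hrhs
      have hfinal : HasDerivAt (fun t => w t - t / Real.sqrt 6)
          (-(-(h s) / (2 * Real.sqrt (-(g s)))) / Real.sqrt (-(g s)) ^ 2 - 1 / Real.sqrt 6) s := by
        exact hwd.sub ((hasDerivAt_id s).div_const _)
      convert hfinal using 1
      rw [hval, hsq]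
      field_simp [ne_of_gt hsx, ne_of_lt hgs, ne_of_gt hsqrt6]
      ring
    have hwb : w b = 1 + b / Real.sqrt 6 := by
      have h0 := const_on hb hvder
      have hw0 : w 0 = 1 := by
        have : -(g 0) = 1 := by rw [hg0]; norm_num
        simp [hw, this]
      rw [hw0] at h0
      norm_num at h0
      linarith
    have hgb : g b < 0 := hneg b (right_mem_Icc.mpr hb)
    have hx : (0:ℝ) < -(g b) := by linarith
    have h1 : Real.sqrt (-(g b)) = (1 + b / Real.sqrt 6)⁻¹ := inv_eq_iff_eq_inv.mp hwb
    have h2 : -(g b) = ((1 + b / Real.sqrt 6)⁻¹)^2 := by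
      rw [← h1, Real.sq_sqrt hx.le]
    have hden : (0:ℝ) < 1 + b / Real.sqrt 6 := by positivity
    have hbs : b + Real.sqrt 6 ≠ 0 := by positivity
    have : g b = -((1 + b / Real.sqrt 6)⁻¹)^2 := by linarith
    rw [this]
    rw [neg_eq_iff_eq_neg, neg_div, neg_neg]
    field_simp
    nlinarith [h6, hsqrt6]
  -- Step 8: g is everywhere negative on Ici 0
  have hgneg : ∀ t ∈ Ici (0:ℝ), g t < 0 := by
    by_contra hcon
    push_neg at hcon
    obtain ⟨t1, ht1, ht1'⟩ := hcon
    have hZ : {t : ℝ | 0 ≤ t ∧ g t = 0}.Nonempty :=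
      ⟨t1, ht1, le_antisymm (hgle t1 ht1) ht1'⟩
    have hbdd : BddBelow {t : ℝ | 0 ≤ t ∧ g t = 0} := ⟨0, fun z hz => hz.1⟩
    set t0 := sInf {t : ℝ | 0 ≤ t ∧ g t = 0} with ht0def
    have ht0mem0 : (0:ℝ) ≤ t0 := le_csInf hZ (fun z hz => hz.1)
    have hgt0 : g t0 = 0 := by
      obtain ⟨u, _, hu_tend, hu_mem⟩ := exists_seq_tendsto_sInf hZ hbdd
      have hc : ContinuousAt g t0 := (hd2 t0 ht0mem0).continuousAt
      have h1 : Tendsto (g ∘ u) atTop (𝓝 (g t0)) := hc.tendsto.comp hu_tend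
      have h2 : (g ∘ u) = fun _ => 0 := funext fun n => (hu_mem n).2
      rw [h2] at h1
      exact (tendsto_nhds_unique h1 tendsto_const_nhds)
    have ht0pos : (0:ℝ) < t0 := by
      rcases eq_or_lt_of_le ht0mem0 with he | hlt
      · exfalso; rw [← he, hg0] at hgt0; norm_num at hgt0
      · exact hlt
    have hbefore : ∀ s ∈ Ico (0:ℝ) t0, g s < 0 := by
      intro s hs
      rcases lt_or_eq_of_le (hgle s hs.1) with hlt | heq
      · exact hlt
      · exact absurd (csInf_le hbdd ⟨hs.1, heq⟩) (not_le.mpr hs.2)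
    have hform : ∀ s ∈ Ico (0:ℝ) t0, g s = -6/(s+Real.sqrt 6)^2 := fun s hs =>
      key s hs.1 (fun u hu => hbefore u ⟨hu.1, lt_of_le_of_lt hu.2 hs.2⟩)
    have hlt1 : Tendsto g (𝓝[<] t0) (𝓝 (g t0)) :=
      (hd2 t0 ht0mem0).continuousAt.tendsto.mono_left nhdsWithin_le_nhds
    have hden : (t0 + Real.sqrt 6) ^ 2 ≠ 0 := by positivity
    have hlt2 : Tendsto g (𝓝[<] t0) (𝓝 (-6/(t0+Real.sqrt 6)^2)) := by
      have hev : (fun s : ℝ => -6/(s+Real.sqrt 6)^2) =ᶠ[𝓝[<] t0] g := by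
        filter_upwards [Ioo_mem_nhdsLT ht0pos] with s hs
        exact (hform s ⟨hs.1.le, hs.2⟩).symm
      have hcont : ContinuousAt (fun s : ℝ => -6/(s+Real.sqrt 6)^2) t0 :=
        ContinuousAt.div continuousAt_const
          (((continuous_id.add continuous_const).pow 2).continuousAt) hden
      exact (hcont.tendsto.mono_left nhdsWithin_le_nhds).congr' hev
    have huniq := tendsto_nhds_unique hlt1 hlt2
    rw [hgt0] at huniq
    have : (0:ℝ) < (t0 + Real.sqrt 6)^2 := by positivity
    rw [eq_div_iff hden] at huniq
    nlinarith
  -- Step 9: explicit formula for g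
  have hgform : ∀ t ∈ Ici (0:ℝ), g t = -6/(t+Real.sqrt 6)^2 :=
    fun t ht => key t ht (fun s hs => hgneg s hs.1)
  -- Step 10: integrate
  intro t ht
  have hder : ∀ s ∈ Icc (0:ℝ) t,
      HasDerivAt (fun u => f u - (a - Real.sqrt 6 + 6/(u+Real.sqrt 6))) 0 s := by
    intro s hs
    have h1 : HasDerivAt f (g s) s := (hd1 s hs.1).hasDerivAt
    have hsne : s + Real.sqrt 6 ≠ 0 := by have := hs.1; positivity
    have h2 := h1.fun_sub (F_hasDeriv a hsne)
    convert h2 using 1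
    · rfl
    · rfl
    rw [hgform s hs.1]
    ring
  have hconst := const_on ht hder
  have hF0 : a - Real.sqrt 6 + 6/((0:ℝ)+Real.sqrt 6) = a := by
    have : Real.sqrt 6 * Real.sqrt 6 = 6 := Real.mul_self_sqrt (by norm_num)
    field_simp
    linarith
  rw [hf0, hF0] at hconst
  linarith

theorem stmt10 (a : ℝ) :
    (∀ t ∈ Set.Ici (0:ℝ),
        deriv (deriv (deriv (fun s => a - Real.sqrt 6 + 6 / (s + Real.sqrt 6)))) t
          = -(deriv (fun s => a - Real.sqrt 6 + 6 / (s + Real.sqrt 6)) t) ^ 2)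
    ∧ (a - Real.sqrt 6 + 6 / (0 + Real.sqrt 6) = a)
    ∧ deriv (fun s => a - Real.sqrt 6 + 6 / (s + Real.sqrt 6)) 0 = -1
    ∧ Filter.Tendsto (deriv (fun s => a - Real.sqrt 6 + 6 / (s + Real.sqrt 6)))
        Filter.atTop (nhds 0)
    ∧ ∀ f : ℝ → ℝ,
        (∀ t ∈ Set.Ici (0:ℝ), DifferentiableAt ℝ f t) →
        (∀ t ∈ Set.Ici (0:ℝ), DifferentiableAt ℝ (deriv f) t) →
        (∀ t ∈ Set.Ici (0:ℝ), DifferentiableAt ℝ (deriv (deriv f)) t) →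
        (∀ t ∈ Set.Ici (0:ℝ),
          deriv (deriv (deriv f)) t = -(deriv f t) ^ 2) →
        f 0 = a → deriv f 0 = -1 →
        Filter.Tendsto (deriv f) Filter.atTop (nhds 0) →
        ∀ t ∈ Set.Ici (0:ℝ), f t = a - Real.sqrt 6 + 6 / (t + Real.sqrt 6) := by
  have hc := sq6_pos
  refine ⟨?_, ?_, ?_, ?_, ?_⟩
  · intro t ht
    have ht' : -Real.sqrt 6 < t := by simp at ht; linarith
    rw [deriv3F_eq a ht', derivF_eq a ht']
    have h0 : t + Real.sqrt 6 ≠ 0 := by linarith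
    field_simp
    ring
  · have : Real.sqrt 6 * Real.sqrt 6 = 6 := Real.mul_self_sqrt (by norm_num)
    field_simp
    linarith
  · rw [derivF_eq a (by linarith)]
    have : Real.sqrt 6 ^ 2 = 6 := Real.sq_sqrt (by norm_num)
    rw [zero_add, this]
    norm_num
  · have hev : (fun t : ℝ => -6 / (t + Real.sqrt 6)^2)
        =ᶠ[atTop] deriv (fun s => a - Real.sqrt 6 + 6 / (s + Real.sqrt 6)) := by
      filter_upwards [eventually_ge_atTop (0:ℝ)] with t ht
      exact (derivF_eq a (by linarith)).symm
    refine Filter.Tendsto.congr' hev ?_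
    have h1 : Tendsto (fun t : ℝ => (t + Real.sqrt 6)^2) atTop atTop :=
      (tendsto_pow_atTop (by norm_num)).comp (tendsto_atTop_add_const_right _ _ tendsto_id)
    simpa using Filter.Tendsto.div_atTop (tendsto_const_nhds (x := (-6:ℝ))) h1
  · intro f hd1 hd2 hd3 hode hf0 hg0 hlim
    exact uniq a f hd1 hd2 hd3 hode hf0 hg0 hlim
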